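/- Product formula for Legendre polynomials via Chebyshev expansion: P_j(cos θ) = ∑_{l=0}^{j} g_l g_{j−l} cos((j−2l)θ), where g_l = (2l)!/(4^l·(l!)²); in particular all coefficients g_l g_{j−l} are positive. -/

import Mathlib

open Finset Real
/-- The Gegenbauer (ultraspherical) polynomial `C_n^ν(x)`, via its standard explicit formula. -/
noncomputable def gegenbauer (ν : ℝ) (n : ℕ) (x : ℝ) : ℝ :=
  ∑ m ∈ Finset.range (n / 2 + 1),
    (-1 : ℝ) ^ m * Real.Gamma (ν + (n : ℝ) - m) /
      (Real.Gamma ν * (m.factorial : ℝ) * ((n - 2 * m).factorial : ℝ)) *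
        (2 * x) ^ (n - 2 * m)

/-- The Legendre polynomial `P_n = C_n^{1/2}`. -/
noncomputable def legendre (n : ℕ) (x : ℝ) : ℝ := gegenbauer (1 / 2) n x


/-- The coefficients `g_l = (2l)!/(4^l (l!)²)`. -/
noncomputable def g (l : ℕ) : ℝ := ((2 * l).factorial : ℝ) / (4 ^ l * (l.factorial : ℝ) ^ 2)


noncomputable def c (n m : ℕ) : ℝ :=
  (-1 : ℝ) ^ m * Real.Gamma (1/2 + (n : ℝ) - m) /
      (Real.Gamma (1/2) * (m.factorial : ℝ) * ((n - 2 * m).factorial : ℝ))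

lemma legendre_eq (n : ℕ) (x : ℝ) :
    legendre n x = ∑ m ∈ Finset.range (n / 2 + 1), c n m * (2 * x) ^ (n - 2 * m) := rfl

noncomputable def S (n : ℕ) (θ : ℝ) : ℝ :=
  ∑ l ∈ Finset.range (n+1), g l * g (n-l) * Real.cos (((n:ℝ) - 2*l)*θ)


lemma gamma_half_ne : Real.Gamma (1/2) ≠ 0 :=
  ne_of_gt (Real.Gamma_pos_of_pos (by norm_num))

lemma c_rec_zero (j : ℕ) : ((j:ℝ)+2) * c (j+2) 0 = (2*j+3)/2 * c (j+1) 0 := by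
  unfold c
  have e1 : (1/2 + ((j+2 : ℕ) : ℝ) - ((0:ℕ):ℝ)) = (1/2 + ((j+1 : ℕ):ℝ) - ((0:ℕ):ℝ)) + 1 := by
    push_cast; ring
  have hpos : (0:ℝ) < 1/2 + ((j+1 : ℕ):ℝ) - ((0:ℕ):ℝ) := by push_cast; linarith [(Nat.cast_nonneg j : (0:ℝ) ≤ j)]
  rw [e1, Real.Gamma_add_one (ne_of_gt hpos)]
  simp only [Nat.sub_zero, Nat.mul_zero]
  have e2 : (j+2) = (j+1)+1 := rfl
  rw [e2, Nat.factorial_succ]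
  have h1 : ((j+1).factorial : ℝ) ≠ 0 := by exact_mod_cast (j+1).factorial_ne_zero
  push_cast
  field_simp
  ring

lemma c_rec (j m : ℕ) (h : 2*m+1 ≤ j) :
    ((j:ℝ)+2) * c (j+2) (m+1) = (2*j+3)/2 * c (j+1) (m+1) - ((j:ℝ)+1) * c j m := by
  obtain ⟨k, rfl⟩ : ∃ k, j = 2*m+1+k := ⟨j-(2*m+1), by omega⟩
  unfold c
  have s1 : (2*m+1+k+2) - 2*(m+1) = k+1 := by omega
  have s2 : (2*m+1+k+1) - 2*(m+1) = k := by omega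
  have s3 : (2*m+1+k) - 2*m = k+1 := by omega
  rw [s1, s2, s3]
  have e1 : (1/2 + ((2*m+1+k+2 : ℕ) : ℝ) - ((m+1:ℕ):ℝ))
      = (1/2 + ((2*m+1+k+1 : ℕ):ℝ) - ((m+1:ℕ):ℝ)) + 1 := by push_cast; ring
  have e2 : (1/2 + ((2*m+1+k : ℕ) : ℝ) - ((m:ℕ):ℝ))
      = (1/2 + ((2*m+1+k+1 : ℕ):ℝ) - ((m+1:ℕ):ℝ)) := by push_cast; ring
  have hpos : (0:ℝ) < 1/2 + ((2*m+1+k+1 : ℕ):ℝ) - ((m+1:ℕ):ℝ) := by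
    push_cast; nlinarith [(Nat.cast_nonneg m : (0:ℝ) ≤ m), (Nat.cast_nonneg k : (0:ℝ) ≤ k)]
  rw [e1, e2, Real.Gamma_add_one (ne_of_gt hpos)]
  rw [Nat.factorial_succ (k), Nat.factorial_succ m]
  have h1 : (m.factorial : ℝ) ≠ 0 := by exact_mod_cast m.factorial_ne_zero
  have h2 : (k.factorial : ℝ) ≠ 0 := by exact_mod_cast k.factorial_ne_zero
  set G := Real.Gamma (1/2 + ((2*m+1+k+1 : ℕ):ℝ) - ((m+1:ℕ):ℝ)) with hG
  push_cast
  field_simp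
  ring

lemma c_boundary (t : ℕ) :
    (2*(t:ℝ)+2) * c (2*t+2) (t+1) = -((2*(t:ℝ)+1) * c (2*t) t) := by
  unfold c
  have s1 : (2*t+2) - 2*(t+1) = 0 := by omega
  have s2 : (2*t) - 2*t = 0 := by omega
  rw [s1, s2]
  have e1 : (1/2 + ((2*t+2 : ℕ) : ℝ) - ((t+1:ℕ):ℝ))
      = (1/2 + ((2*t : ℕ):ℝ) - ((t:ℕ):ℝ)) + 1 := by push_cast; ring
  have hpos : (0:ℝ) < 1/2 + ((2*t : ℕ):ℝ) - ((t:ℕ):ℝ) := by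
    push_cast; nlinarith [(Nat.cast_nonneg t : (0:ℝ) ≤ t)]
  rw [e1, Real.Gamma_add_one (ne_of_gt hpos)]
  rw [Nat.factorial_succ t]
  have h1 : (t.factorial : ℝ) ≠ 0 := by exact_mod_cast t.factorial_ne_zero
  push_cast
  field_simp
  ring


lemma g_pos (l : ℕ) : 0 < g l := by
  unfold g
  have h1 : (0:ℝ) < ((2*l).factorial : ℝ) := by exact_mod_cast (2*l).factorial_pos
  have h2 : (0:ℝ) < (l.factorial : ℝ) := by exact_mod_cast l.factorial_pos
  positivity

lemma g_rec (l : ℕ) : (2*(l:ℝ)+2) * g (l+1) = (2*l+1) * g l := by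
  unfold g
  have e1 : 2*(l+1) = (2*l+1)+1 := by ring
  rw [e1, Nat.factorial_succ, Nat.factorial_succ, Nat.factorial_succ]
  have h2 : (l.factorial : ℝ) ≠ 0 := by exact_mod_cast l.factorial_ne_zero
  have h4 : (4:ℝ)^l ≠ 0 := by positivity
  push_cast
  field_simp
  ring


lemma g_eq (l : ℕ) : g (l+1) = (2*(l:ℝ)+1)/(2*l+2) * g l := by
  have h := g_rec l
  have h2 : (2*(l:ℝ)+2) ≠ 0 := by positivity
  field_simp
  linarith

lemma g_identity (l d : ℕ) :
    ((l:ℝ)+d+2) * (g (l+1) * g (d+1)) =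
      (2*((l:ℝ)+d)+3)/2 * (g (l+1) * g d + g l * g (d+1)) - ((l:ℝ)+d+1) * (g l * g d) := by
  rw [g_eq l, g_eq d]
  have h1 : (2*(l:ℝ)+2) ≠ 0 := by positivity
  have h2 : (2*(d:ℝ)+2) ≠ 0 := by positivity
  field_simp
  ring


lemma legendre_rec_even (t : ℕ) (x : ℝ) :
    (((2*t:ℕ):ℝ)+2) * legendre (2*t+2) x
      = (2*((2*t:ℕ):ℝ)+3) * x * legendre (2*t+1) x - (((2*t:ℕ):ℝ)+1) * legendre (2*t) x := by
  rw [legendre_eq, legendre_eq, legendre_eq]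
  simp only [show (2*t+2)/2+1 = t+2 from by omega, show (2*t+1)/2+1 = t+1 from by omega,
    show (2*t)/2+1 = t+1 from by omega]
  rw [Finset.mul_sum, Finset.mul_sum, Finset.mul_sum]
  rw [Finset.sum_range_succ (fun m => (((2*t:ℕ):ℝ)+2) * (c (2*t+2) m * (2*x)^((2*t+2) - 2*m))) (t+1)]
  rw [Finset.sum_range_succ' (fun m => (((2*t:ℕ):ℝ)+2) * (c (2*t+2) m * (2*x)^((2*t+2) - 2*m))) t]
  rw [Finset.sum_range_succ' (fun m => ((2*((2*t:ℕ):ℝ)+3)*x) * (c (2*t+1) m * (2*x)^((2*t+1) - 2*m))) t]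
  rw [Finset.sum_range_succ (fun m => (((2*t:ℕ):ℝ)+1) * (c (2*t) m * (2*x)^(2*t - 2*m))) t]
  have key : ∀ m ∈ Finset.range t,
      (((2*t:ℕ):ℝ)+2) * (c (2*t+2) (m+1) * (2*x)^((2*t+2) - 2*(m+1)))
        = ((2*((2*t:ℕ):ℝ)+3)*x) * (c (2*t+1) (m+1) * (2*x)^((2*t+1) - 2*(m+1)))
          - (((2*t:ℕ):ℝ)+1) * (c (2*t) m * (2*x)^(2*t - 2*m)) := by
    intro m hm
    rw [Finset.mem_range] at hm
    have hc := c_rec (2*t) m (by omega)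
    have e1 : (2*t+2) - 2*(m+1) = ((2*t+1) - 2*(m+1)) + 1 := by omega
    have e2 : (2*t) - 2*m = ((2*t+1) - 2*(m+1)) + 1 := by omega
    rw [e1, e2, pow_succ]
    push_cast at hc ⊢
    linear_combination ((2*x)^((2*t+1) - 2*(m+1)) * (2*x)) * hc
  have hsum : (∑ m ∈ Finset.range t,
      (((2*t:ℕ):ℝ)+2) * (c (2*t+2) (m+1) * (2*x)^((2*t+2) - 2*(m+1))))
      = (∑ m ∈ Finset.range t, ((2*((2*t:ℕ):ℝ)+3)*x) * (c (2*t+1) (m+1) * (2*x)^((2*t+1) - 2*(m+1))))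
        - (∑ m ∈ Finset.range t, (((2*t:ℕ):ℝ)+1) * (c (2*t) m * (2*x)^(2*t - 2*m))) := by
    rw [← Finset.sum_sub_distrib]
    exact Finset.sum_congr rfl key
  have hF0 : (((2*t:ℕ):ℝ)+2) * (c (2*t+2) 0 * (2*x)^((2*t+2) - 2*0))
      = ((2*((2*t:ℕ):ℝ)+3)*x) * (c (2*t+1) 0 * (2*x)^((2*t+1) - 2*0)) := by
    have h := c_rec_zero (2*t)
    have e0 : (2*t+1) - 2*0 = 2*t+1 := by omega
    have e : (2*t+2) - 2*0 = (2*t+1) + 1 := by omega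
    rw [e0, e, pow_succ]
    push_cast at h ⊢
    linear_combination ((2*x)^(2*t+1) * (2*x)) * h
  have hlast : (((2*t:ℕ):ℝ)+2) * (c (2*t+2) (t+1) * (2*x)^((2*t+2) - 2*(t+1)))
      = -((((2*t:ℕ):ℝ)+1) * (c (2*t) t * (2*x)^(2*t - 2*t))) := by
    have h := c_boundary t
    have e1 : (2*t+2) - 2*(t+1) = 0 := by omega
    have e2 : 2*t - 2*t = 0 := by omega
    rw [e1, e2, pow_zero]
    push_cast at h ⊢
    linear_combination h
  linarith [hsum, hF0, hlast]


lemma legendre_rec_odd (t : ℕ) (x : ℝ) :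
    (((2*t+1:ℕ):ℝ)+2) * legendre (2*t+1+2) x
      = (2*((2*t+1:ℕ):ℝ)+3) * x * legendre (2*t+1+1) x - (((2*t+1:ℕ):ℝ)+1) * legendre (2*t+1) x := by
  rw [legendre_eq, legendre_eq, legendre_eq]
  simp only [show (2*t+1+2)/2+1 = t+2 from by omega, show (2*t+1+1)/2+1 = t+2 from by omega,
    show (2*t+1)/2+1 = t+1 from by omega]
  rw [Finset.mul_sum, Finset.mul_sum, Finset.mul_sum]
  rw [Finset.sum_range_succ' (fun m => (((2*t+1:ℕ):ℝ)+2) * (c (2*t+1+2) m * (2*x)^((2*t+1+2) - 2*m))) (t+1)]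
  rw [Finset.sum_range_succ' (fun m => ((2*((2*t+1:ℕ):ℝ)+3)*x) * (c (2*t+1+1) m * (2*x)^((2*t+1+1) - 2*m))) (t+1)]
  have key : ∀ m ∈ Finset.range (t+1),
      (((2*t+1:ℕ):ℝ)+2) * (c (2*t+1+2) (m+1) * (2*x)^((2*t+1+2) - 2*(m+1)))
        = ((2*((2*t+1:ℕ):ℝ)+3)*x) * (c (2*t+1+1) (m+1) * (2*x)^((2*t+1+1) - 2*(m+1)))
          - (((2*t+1:ℕ):ℝ)+1) * (c (2*t+1) m * (2*x)^((2*t+1) - 2*m)) := by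
    intro m hm
    rw [Finset.mem_range] at hm
    have hc := c_rec (2*t+1) m (by omega)
    have e1 : (2*t+1+2) - 2*(m+1) = ((2*t+1+1) - 2*(m+1)) + 1 := by omega
    have e2 : (2*t+1) - 2*m = ((2*t+1+1) - 2*(m+1)) + 1 := by omega
    rw [e1, e2, pow_succ]
    push_cast at hc ⊢
    linear_combination ((2*x)^((2*t+1+1) - 2*(m+1)) * (2*x)) * hc
  have hsum : (∑ m ∈ Finset.range (t+1),
      (((2*t+1:ℕ):ℝ)+2) * (c (2*t+1+2) (m+1) * (2*x)^((2*t+1+2) - 2*(m+1))))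
      = (∑ m ∈ Finset.range (t+1), ((2*((2*t+1:ℕ):ℝ)+3)*x) * (c (2*t+1+1) (m+1) * (2*x)^((2*t+1+1) - 2*(m+1))))
        - (∑ m ∈ Finset.range (t+1), (((2*t+1:ℕ):ℝ)+1) * (c (2*t+1) m * (2*x)^((2*t+1) - 2*m))) := by
    rw [← Finset.sum_sub_distrib]
    exact Finset.sum_congr rfl key
  have hF0 : (((2*t+1:ℕ):ℝ)+2) * (c (2*t+1+2) 0 * (2*x)^((2*t+1+2) - 2*0))
      = ((2*((2*t+1:ℕ):ℝ)+3)*x) * (c (2*t+1+1) 0 * (2*x)^((2*t+1+1) - 2*0)) := by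
    have h := c_rec_zero (2*t+1)
    have e0 : (2*t+1+1) - 2*0 = 2*t+2 := by omega
    have e : (2*t+1+2) - 2*0 = (2*t+2) + 1 := by omega
    rw [e0, e, pow_succ]
    push_cast at h ⊢
    linear_combination ((2*x)^(2*t+2) * (2*x)) * h
  linarith [hsum, hF0]


lemma legendre_rec (j : ℕ) (x : ℝ) :
    ((j:ℝ)+2) * legendre (j+2) x
      = (2*(j:ℝ)+3) * x * legendre (j+1) x - ((j:ℝ)+1) * legendre j x := by
  rcases Nat.even_or_odd j with he | ho
  · obtain ⟨t, rfl⟩ : ∃ t, j = 2*t := by obtain ⟨t, ht⟩ := he; exact ⟨t, by omega⟩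
    exact legendre_rec_even t x
  · obtain ⟨t, rfl⟩ := ho
    exact legendre_rec_odd t x


lemma S_rec (j : ℕ) (θ : ℝ) :
    ((j:ℝ)+2) * S (j+2) θ = (2*(j:ℝ)+3) * Real.cos θ * S (j+1) θ - ((j:ℝ)+1) * S j θ := by
  unfold S
  rw [Finset.mul_sum, Finset.mul_sum, Finset.mul_sum]
  have split : ∀ l ∈ Finset.range (j+1+1),
      ((2*(j:ℝ)+3) * Real.cos θ) * (g l * g ((j+1)-l) * Real.cos ((((j+1:ℕ):ℝ) - 2*l)*θ))
        = ((2*(j:ℝ)+3)/2) * (g l * g ((j+1)-l) * Real.cos ((((j+2:ℕ):ℝ) - 2*l)*θ))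
          + ((2*(j:ℝ)+3)/2) * (g l * g ((j+1)-l) * Real.cos (((j:ℝ) - 2*l)*θ)) := by
    intro l _
    have hc : Real.cos ((((j+2:ℕ):ℝ) - 2*l)*θ) + Real.cos (((j:ℝ) - 2*l)*θ)
        = 2 * Real.cos ((((j+1:ℕ):ℝ) - 2*l)*θ) * Real.cos θ := by
      have e1 : ((((j+2:ℕ):ℝ)) - 2*(l:ℝ))*θ = ((((j+1:ℕ):ℝ)) - 2*(l:ℝ))*θ + θ := by
        push_cast; ring
      have e2 : (((j:ℝ)) - 2*(l:ℝ))*θ = ((((j+1:ℕ):ℝ)) - 2*(l:ℝ))*θ - θ := by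
        push_cast; ring
      rw [e1, e2, Real.cos_add, Real.cos_sub]
      ring
    linear_combination (-((2*(j:ℝ)+3)/2 * (g l * g ((j+1)-l)))) * hc
  rw [Finset.sum_congr rfl split, Finset.sum_add_distrib]
  rw [Finset.sum_range_succ
      (fun l => ((j:ℝ)+2) * (g l * g ((j+2)-l) * Real.cos ((((j+2:ℕ):ℝ) - 2*l)*θ))) (j+2)]
  rw [Finset.sum_range_succ'
      (fun l => ((j:ℝ)+2) * (g l * g ((j+2)-l) * Real.cos ((((j+2:ℕ):ℝ) - 2*l)*θ))) (j+1)]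
  rw [Finset.sum_range_succ'
      (fun l => ((2*(j:ℝ)+3)/2) * (g l * g ((j+1)-l) * Real.cos ((((j+2:ℕ):ℝ) - 2*l)*θ))) (j+1)]
  rw [Finset.sum_range_succ
      (fun l => ((2*(j:ℝ)+3)/2) * (g l * g ((j+1)-l) * Real.cos (((j:ℝ) - 2*l)*θ))) (j+1)]
  have key : ∀ l ∈ Finset.range (j+1),
      ((j:ℝ)+2) * (g (l+1) * g ((j+2)-(l+1)) * Real.cos ((((j+2:ℕ):ℝ) - 2*((l+1:ℕ):ℝ))*θ))
        = ((2*(j:ℝ)+3)/2) * (g (l+1) * g ((j+1)-(l+1)) * Real.cos ((((j+2:ℕ):ℝ) - 2*((l+1:ℕ):ℝ))*θ))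
          + ((2*(j:ℝ)+3)/2) * (g l * g ((j+1)-l) * Real.cos (((j:ℝ) - 2*l)*θ))
          - ((j:ℝ)+1) * (g l * g (j-l) * Real.cos (((j:ℝ) - 2*l)*θ)) := by
    intro l hl
    rw [Finset.mem_range] at hl
    obtain ⟨d, rfl⟩ : ∃ d, j = l + d := ⟨j - l, by omega⟩
    rw [show (l+d)+2-(l+1) = d+1 from by omega, show (l+d)+1-(l+1) = d from by omega,
      show (l+d)-l = d from by omega, show (l+d)+1-l = d+1 from by omega]
    have ecos : ((((l+d)+2:ℕ):ℝ) - 2*((l+1:ℕ):ℝ))*θ = (((l+d:ℕ):ℝ) - 2*((l:ℕ):ℝ))*θ := by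
      push_cast; ring
    rw [ecos]
    push_cast
    linear_combination Real.cos (((l:ℝ) + (d:ℝ) - 2*(l:ℝ))*θ) * g_identity l d
  have hsum : (∑ l ∈ Finset.range (j+1),
      ((j:ℝ)+2) * (g (l+1) * g ((j+2)-(l+1)) * Real.cos ((((j+2:ℕ):ℝ) - 2*((l+1:ℕ):ℝ))*θ)))
      = (∑ l ∈ Finset.range (j+1),
          ((2*(j:ℝ)+3)/2) * (g (l+1) * g ((j+1)-(l+1)) * Real.cos ((((j+2:ℕ):ℝ) - 2*((l+1:ℕ):ℝ))*θ)))
        + (∑ l ∈ Finset.range (j+1),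
          ((2*(j:ℝ)+3)/2) * (g l * g ((j+1)-l) * Real.cos (((j:ℝ) - 2*l)*θ)))
        - (∑ l ∈ Finset.range (j+1),
          ((j:ℝ)+1) * (g l * g (j-l) * Real.cos (((j:ℝ) - 2*l)*θ))) := by
    rw [← Finset.sum_add_distrib, ← Finset.sum_sub_distrib]
    exact Finset.sum_congr rfl key
  have hg := g_rec (j+1)
  rw [show j+1+1 = j+2 from by omega] at hg
  push_cast at hg
  have hF0 : ((j:ℝ)+2) * (g 0 * g ((j+2)-0) * Real.cos ((((j+2:ℕ):ℝ) - 2*(0:ℕ))*θ))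
      = ((2*(j:ℝ)+3)/2) * (g 0 * g ((j+1)-0) * Real.cos ((((j+2:ℕ):ℝ) - 2*(0:ℕ))*θ)) := by
    simp only [Nat.sub_zero]
    linear_combination (g 0 * Real.cos ((((j+2:ℕ):ℝ) - 2*((0:ℕ):ℝ))*θ) / 2) * hg
  have hFlast : ((j:ℝ)+2) * (g (j+2) * g ((j+2)-(j+2)) * Real.cos ((((j+2:ℕ):ℝ) - 2*((j+2:ℕ):ℝ))*θ))
      = ((2*(j:ℝ)+3)/2) * (g (j+1) * g ((j+1)-(j+1)) * Real.cos (((j:ℝ) - 2*((j+1:ℕ):ℝ))*θ)) := by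
    simp only [Nat.sub_self]
    rw [show (((j+2:ℕ):ℝ) - 2*((j+2:ℕ):ℝ))*θ = (((j:ℕ):ℝ) - 2*((j+1:ℕ):ℝ))*θ from by push_cast; ring]
    linear_combination (g 0 * Real.cos (((j:ℝ) - 2*((j+1:ℕ):ℝ))*θ) / 2) * hg
  linarith [hsum, hF0, hFlast]


lemma g_zero : g 0 = 1 := by unfold g; norm_num
lemma g_one : g 1 = 1/2 := by unfold g; norm_num [Nat.factorial]

lemma legendre_zero (x : ℝ) : legendre 0 x = 1 := by
  unfold legendre gegenbauer
  norm_num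
  exact gamma_half_ne

lemma legendre_one (x : ℝ) : legendre 1 x = x := by
  unfold legendre gegenbauer
  norm_num
  rw [show (3:ℝ)/2 = 1/2 + 1 by norm_num, Real.Gamma_add_one (by norm_num)]
  field_simp [gamma_half_ne]

lemma S_zero (θ : ℝ) : S 0 θ = 1 := by
  unfold S
  norm_num [g_zero]

lemma S_one (θ : ℝ) : S 1 θ = Real.cos θ := by
  unfold S
  rw [Finset.sum_range_succ, Finset.sum_range_one]
  norm_num [g_zero, g_one]
  ring


lemma main_eq (θ : ℝ) (j : ℕ) : legendre j (Real.cos θ) = S j θ := by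
  suffices h : ∀ n : ℕ, legendre n (Real.cos θ) = S n θ ∧ legendre (n+1) (Real.cos θ) = S (n+1) θ by
    exact (h j).1
  intro n
  induction n with
  | zero => exact ⟨by rw [legendre_zero, S_zero], by rw [legendre_one, S_one]⟩
  | succ n ih =>
    refine ⟨ih.2, ?_⟩
    have hpos : ((n:ℝ)+2) ≠ 0 := by positivity
    have h : ((n:ℝ)+2) * legendre (n+2) (Real.cos θ) = ((n:ℝ)+2) * S (n+2) θ := by
      rw [legendre_rec n (Real.cos θ), S_rec n θ, ih.1, ih.2]
    have h2 := mul_left_cancel₀ hpos h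
    rw [show n+1+1 = n+2 from by omega]
    exact h2

/-- Product formula: `P_j(cos θ) = ∑_{l=0}^j g_l g_{j-l} cos((j-2l)θ)`, with all
coefficients `g_l g_{j-l}` positive. -/
theorem legendre_cos_expansion (j : ℕ) (θ : ℝ) :
    legendre j (Real.cos θ) =
        ∑ l ∈ Finset.range (j + 1), g l * g (j - l) * Real.cos (((j : ℝ) - 2 * l) * θ) ∧
      ∀ l : ℕ, l ≤ j → 0 < g l * g (j - l) := by
  constructor
  · exact main_eq θ j
  · intro l _
    exact mul_pos (g_pos l) (g_pos (j - l))
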